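/- Theorem 2 (lower bound on forward channel flow): Suppose random variables x_0, x^n, y^n, e^{n-1} satisfy the identity I(x^n → y^n) = I(x_0; y^n) + I(e^{n-1}; x_0 | y^n) + I(e^{n-1} → y^n), and for each i ≤ n−1: x_i is a deterministic function of (x_0, e^{i-1}) and I(x_0; e_i | e^{i-1}, x^i) = 0. Then I(x^n → y^n) ≥ I(x^{n-1} → e^{n-1}) + I(e^{n-1} → y^n), with the gap equal to I(y^n; x_0 | e^{n-1}). -/

import Mathlib

open scoped BigOperators

/-- Distribution of a finite-valued random variable `X` under pmf `p`. -/
noncomputable def rvDist {Ω A : Type*} [Fintype Ω] [Fintype A] [DecidableEq A]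
    (p : Ω → ℝ) (X : Ω → A) (a : A) : ℝ := ∑ ω, if X ω = a then p ω else 0

/-- Shannon entropy `H(X)`. -/
noncomputable def ent {Ω A : Type*} [Fintype Ω] [Fintype A] [DecidableEq A]
    (p : Ω → ℝ) (X : Ω → A) : ℝ := ∑ a, Real.negMulLog (rvDist p X a)

/-- Conditional entropy `H(X | Y) = H(X,Y) - H(Y)`. -/
noncomputable def condEnt {Ω A B : Type*} [Fintype Ω] [Fintype A] [DecidableEq A]
    [Fintype B] [DecidableEq B] (p : Ω → ℝ) (X : Ω → A) (Y : Ω → B) : ℝ :=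
  ent p (fun ω => (X ω, Y ω)) - ent p Y

/-- Mutual information `I(X;Y) = H(X)+H(Y)-H(X,Y)`. -/
noncomputable def MI {Ω A B : Type*} [Fintype Ω] [Fintype A] [DecidableEq A]
    [Fintype B] [DecidableEq B] (p : Ω → ℝ) (X : Ω → A) (Y : Ω → B) : ℝ :=
  ent p X + ent p Y - ent p (fun ω => (X ω, Y ω))

/-- Conditional mutual information `I(X;Y|Z) = H(X|Z)+H(Y|Z)-H(X,Y|Z)`. -/
noncomputable def CMI {Ω A B C : Type*} [Fintype Ω] [Fintype A] [DecidableEq A]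
    [Fintype B] [DecidableEq B] [Fintype C] [DecidableEq C]
    (p : Ω → ℝ) (X : Ω → A) (Y : Ω → B) (Z : Ω → C) : ℝ :=
  condEnt p X Z + condEnt p Y Z - condEnt p (fun ω => (X ω, Y ω)) Z

/-- The prefix `x^i = (x_1, …, x_i)` of a random sequence, as a random variable. -/
def pre {Ω A : Type*} {n : ℕ} (x : Fin n → Ω → A) (i : ℕ) (h : i ≤ n) :
    Ω → (Fin i → A) := fun ω j => x (Fin.castLE h j) ω

/-- Directed information `I(x^n → y^n) = ∑_{i=1}^n I(x^i; y_i | y^{i-1})`. -/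
noncomputable def DI {Ω A B : Type*} [Fintype Ω] [Fintype A] [DecidableEq A]
    [Fintype B] [DecidableEq B] {n : ℕ}
    (p : Ω → ℝ) (x : Fin n → Ω → A) (y : Fin n → Ω → B) : ℝ :=
  ∑ i : Fin n, CMI p (pre x (i.1+1) i.isLt) (y i) (pre y i.1 i.isLt.le)

/-! ### Auxiliary lemmas -/

section Basic
variable {Ω A B : Type*} [Fintype Ω] [Fintype A] [DecidableEq A]
  [Fintype B] [DecidableEq B] (p : Ω → ℝ)

lemma rvDist_nonneg (hp : ∀ ω, 0 ≤ p ω) (X : Ω → A) (a : A) : 0 ≤ rvDist p X a :=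
  Finset.sum_nonneg fun ω _ => by split <;> simp [hp ω]

lemma rvDist_sum (X : Ω → A) : ∑ a, rvDist p X a = ∑ ω, p ω := by
  unfold rvDist
  rw [Finset.sum_comm]
  exact Finset.sum_congr rfl fun ω _ => by simp

lemma ent_comp_inj (f : A → B) (hf : Function.Injective f) (X : Ω → A) :
    ent p (fun ω => f (X ω)) = ent p X := by
  have h1 : ∀ a, rvDist p (fun ω => f (X ω)) (f a) = rvDist p X a := by
    intro a; unfold rvDist; exact Finset.sum_congr rfl fun ω _ => by simp [hf.eq_iff]
  unfold ent
  have key : ∑ b ∈ Finset.univ.image f,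
      Real.negMulLog (rvDist p (fun ω => f (X ω)) b) = ∑ a, Real.negMulLog (rvDist p X a) := by
    rw [Finset.sum_image (fun a _ b _ h => hf h)]
    exact Finset.sum_congr rfl fun a _ => by rw [h1]
  rw [← key]
  symm
  apply Finset.sum_subset (Finset.subset_univ _)
  intro b _ hb
  have hz : rvDist p (fun ω => f (X ω)) b = 0 := by
    refine Finset.sum_eq_zero fun ω _ => ?_
    have : f (X ω) ≠ b := fun h => hb (Finset.mem_image.2 ⟨X ω, Finset.mem_univ _, h⟩)
    simp [this]
  simp [hz, Real.negMulLog_zero]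

lemma ent_congr {X : Ω → A} {Y : Ω → B}
    (f : A → B) (g : B → A) (hf : ∀ ω, f (X ω) = Y ω) (hg : ∀ ω, g (Y ω) = X ω) :
    ent p X = ent p Y := by
  have inj1 : Function.Injective (fun a : A => (a, f a)) := fun a b h => congrArg Prod.fst h
  have inj2 : Function.Injective (fun b : B => (g b, b)) := fun a b h => congrArg Prod.snd h
  have hx : ent p (fun ω => (X ω, Y ω)) = ent p X := by
    have e1 : (fun ω => (X ω, Y ω)) = fun ω => ((fun a => (a, f a)) (X ω)) := by
      funext ω; simp [hf ω]
    rw [e1, ent_comp_inj p (fun a => (a, f a)) inj1 X]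
  have hy : ent p (fun ω => (X ω, Y ω)) = ent p Y := by
    have e2 : (fun ω => (X ω, Y ω)) = fun ω => ((fun b => (g b, b)) (Y ω)) := by
      funext ω; simp [hg ω]
    rw [e2, ent_comp_inj p (fun b => (g b, b)) inj2 Y]
  rw [← hx, hy]

end Basic

lemma gibbs {ι : Type*} [Fintype ι] (f g : ι → ℝ) (hf : ∀ i, 0 ≤ f i)
    (hg : ∀ i, 0 ≤ g i) (hfg : ∀ i, 0 < f i → 0 < g i)
    (hsum : ∑ i, g i ≤ ∑ i, f i) :
    ∑ i, f i * Real.log (g i / f i) ≤ 0 := by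
  have key : ∀ i, f i * Real.log (g i / f i) ≤ g i - f i := by
    intro i
    rcases eq_or_lt_of_le (hf i) with h | h
    · simp [← h, hg i]
    · have hgi := hfg i h
      have hdiv : 0 < g i / f i := div_pos hgi h
      calc f i * Real.log (g i / f i) ≤ f i * (g i / f i - 1) :=
            mul_le_mul_of_nonneg_left (Real.log_le_sub_one_of_pos hdiv) (hf i)
        _ = g i - f i := by field_simp
  calc ∑ i, f i * Real.log (g i / f i) ≤ ∑ i, (g i - f i) :=
        Finset.sum_le_sum fun i _ => key i
    _ = ∑ i, g i - ∑ i, f i := Finset.sum_sub_distrib _ _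
    _ ≤ 0 := by linarith

lemma sum_rotate {A B C : Type*} [Fintype A] [Fintype B] [Fintype C] (F : A → B → C → ℝ) :
    ∑ a, ∑ b, ∑ c, F a b c = ∑ c, ∑ a, ∑ b, F a b c :=
  calc ∑ a, ∑ b, ∑ c, F a b c = ∑ a, ∑ c, ∑ b, F a b c :=
        Finset.sum_congr rfl fun a _ => Finset.sum_comm
    _ = ∑ c, ∑ a, ∑ b, F a b c := Finset.sum_comm

lemma negMulLog_sum {ι : Type*} [Fintype ι] (f : ι → ℝ) :
    Real.negMulLog (∑ i, f i) = ∑ i, -(f i * Real.log (∑ j, f j)) := by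
  rw [Real.negMulLog, neg_mul, Finset.sum_mul]
  simp

lemma negMulLog_sum' {ι : Type*} [Fintype ι] (f : ι → ℝ) (S : ℝ) (hS : S = ∑ i, f i) :
    Real.negMulLog S = ∑ i, -(f i * Real.log S) := by
  subst hS; exact negMulLog_sum f

section Marg
variable {Ω A B C : Type*} [Fintype Ω] [Fintype A] [DecidableEq A]
  [Fintype B] [DecidableEq B] [Fintype C] [DecidableEq C]
  (p : Ω → ℝ) (X : Ω → A) (Y : Ω → B) (Z : Ω → C)

lemma margXZ (a : A) (c : C) : rvDist p (fun ω => (X ω, Z ω)) (a, c)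
    = ∑ b, rvDist p (fun ω => (X ω, Y ω, Z ω)) (a, b, c) := by
  unfold rvDist
  rw [Finset.sum_comm]
  refine Finset.sum_congr rfl fun ω _ => ?_
  by_cases h1 : X ω = a <;> by_cases h2 : Z ω = c <;> simp [Prod.ext_iff, h1, h2]

lemma margYZ (b : B) (c : C) : rvDist p (fun ω => (Y ω, Z ω)) (b, c)
    = ∑ a, rvDist p (fun ω => (X ω, Y ω, Z ω)) (a, b, c) := by
  unfold rvDist
  rw [Finset.sum_comm]
  refine Finset.sum_congr rfl fun ω _ => ?_
  by_cases h1 : Y ω = b <;> by_cases h2 : Z ω = c <;> simp [Prod.ext_iff, h1, h2]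

lemma marg_snd (c : C) : rvDist p Z c
    = ∑ b, rvDist p (fun ω => (Y ω, Z ω)) (b, c) := by
  unfold rvDist
  rw [Finset.sum_comm]
  refine Finset.sum_congr rfl fun ω _ => ?_
  by_cases h1 : Z ω = c <;> simp [Prod.ext_iff, h1]

lemma margZ (c : C) : rvDist p Z c
    = ∑ a, ∑ b, rvDist p (fun ω => (X ω, Y ω, Z ω)) (a, b, c) := by
  rw [Finset.sum_comm, marg_snd p Y Z c]
  exact Finset.sum_congr rfl fun b _ => margYZ p X Y Z b c

end Marg

section CMINonneg
variable {Ω A B C : Type*} [Fintype Ω] [Fintype A] [DecidableEq A]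
  [Fintype B] [DecidableEq B] [Fintype C] [DecidableEq C]

lemma cmi_nonneg (p : Ω → ℝ) (hp : ∀ ω, 0 ≤ p ω) (X : Ω → A) (Y : Ω → B) (Z : Ω → C) :
    0 ≤ CMI p X Y Z := by
  classical
  set r : A → B → C → ℝ := fun a b c => rvDist p (fun ω => (X ω, Y ω, Z ω)) (a, b, c) with hrdef
  have hr : ∀ a b c, 0 ≤ r a b c := fun a b c => rvDist_nonneg p hp _ _
  set m2 : A → C → ℝ := fun a c => ∑ b, r a b c with hm2def
  set m1 : B → C → ℝ := fun b c => ∑ a, r a b c with hm1def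
  set mz : C → ℝ := fun c => ∑ a, ∑ b, r a b c with hmzdef
  have hm2 : ∀ a c, 0 ≤ m2 a c := fun a c => Finset.sum_nonneg fun b _ => hr a b c
  have hm1 : ∀ b c, 0 ≤ m1 b c := fun b c => Finset.sum_nonneg fun a _ => hr a b c
  have hmz : ∀ c, 0 ≤ mz c := fun c => Finset.sum_nonneg fun a _ => hm2 a c
  have hrm2 : ∀ a b c, r a b c ≤ m2 a c := fun a b c =>
    Finset.single_le_sum (fun b' _ => hr a b' c) (Finset.mem_univ b)
  have hrm1 : ∀ a b c, r a b c ≤ m1 b c := fun a b c =>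
    Finset.single_le_sum (fun a' _ => hr a' b c) (Finset.mem_univ a)
  have hm2mz : ∀ a c, m2 a c ≤ mz c := fun a c =>
    Finset.single_le_sum (fun a' _ => hm2 a' c) (Finset.mem_univ a)
  have E1 : ent p (fun ω => (X ω, Z ω)) = ∑ a, ∑ c, Real.negMulLog (m2 a c) := by
    rw [ent, Fintype.sum_prod_type]
    exact Finset.sum_congr rfl fun a _ => Finset.sum_congr rfl fun c _ => by
      rw [margXZ p X Y Z a c]
  have E2 : ent p (fun ω => (Y ω, Z ω)) = ∑ b, ∑ c, Real.negMulLog (m1 b c) := by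
    rw [ent, Fintype.sum_prod_type]
    exact Finset.sum_congr rfl fun b _ => Finset.sum_congr rfl fun c _ => by
      rw [margYZ p X Y Z b c]
  have E3 : ent p Z = ∑ c, Real.negMulLog (mz c) := by
    rw [ent]
    exact Finset.sum_congr rfl fun c _ => by rw [margZ p X Y Z c]
  have E4 : ent p (fun ω => ((X ω, Y ω), Z ω)) = ∑ a, ∑ b, ∑ c, Real.negMulLog (r a b c) := by
    have h := ent_congr p (X := fun ω => ((X ω, Y ω), Z ω)) (Y := fun ω => (X ω, Y ω, Z ω))
      (fun t => (t.1.1, (t.1.2, t.2))) (fun t => ((t.1, t.2.1), t.2.2))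
      (fun ω => rfl) (fun ω => rfl)
    rw [h, ent, Fintype.sum_prod_type]
    refine Finset.sum_congr rfl fun a _ => ?_
    rw [Fintype.sum_prod_type]
  have key : CMI p X Y Z =
      (∑ a, ∑ c, Real.negMulLog (m2 a c)) + (∑ b, ∑ c, Real.negMulLog (m1 b c))
      - (∑ c, Real.negMulLog (mz c)) - ∑ a, ∑ b, ∑ c, Real.negMulLog (r a b c) := by
    rw [CMI, condEnt, condEnt, condEnt, E1, E2, E3, E4]; ring
  rw [key]
  have R1 : (∑ a, ∑ c, Real.negMulLog (m2 a c)) =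
      ∑ a, ∑ b, ∑ c, -(r a b c * Real.log (m2 a c)) := by
    refine Finset.sum_congr rfl fun a _ => ?_
    calc ∑ c, Real.negMulLog (m2 a c) = ∑ c, ∑ b, -(r a b c * Real.log (m2 a c)) :=
          Finset.sum_congr rfl fun c _ => negMulLog_sum' (fun b => r a b c) (m2 a c) rfl
      _ = ∑ b, ∑ c, -(r a b c * Real.log (m2 a c)) := Finset.sum_comm
  have R2 : (∑ b, ∑ c, Real.negMulLog (m1 b c)) =
      ∑ a, ∑ b, ∑ c, -(r a b c * Real.log (m1 b c)) := by
    calc ∑ b, ∑ c, Real.negMulLog (m1 b c)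
        = ∑ b, ∑ c, ∑ a, -(r a b c * Real.log (m1 b c)) :=
          Finset.sum_congr rfl fun b _ => Finset.sum_congr rfl fun c _ =>
            negMulLog_sum' (fun a => r a b c) (m1 b c) rfl
      _ = ∑ a, ∑ b, ∑ c, -(r a b c * Real.log (m1 b c)) :=
          sum_rotate (fun b c a => -(r a b c * Real.log (m1 b c)))
  have R3 : (∑ c, Real.negMulLog (mz c)) =
      ∑ a, ∑ b, ∑ c, -(r a b c * Real.log (mz c)) := by
    calc ∑ c, Real.negMulLog (mz c)
        = ∑ c, ∑ a, ∑ b, -(r a b c * Real.log (mz c)) := by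
          refine Finset.sum_congr rfl fun c _ => ?_
          rw [negMulLog_sum' (fun a => ∑ b, r a b c) (mz c) rfl]
          refine Finset.sum_congr rfl fun a _ => ?_
          rw [Finset.sum_mul]
          exact (Finset.sum_neg_distrib _).symm
      _ = ∑ a, ∑ b, ∑ c, -(r a b c * Real.log (mz c)) :=
          (sum_rotate (fun a b c => -(r a b c * Real.log (mz c)))).symm
  rw [R1, R2, R3]
  simp only [Real.negMulLog, neg_mul]
  set g : A → B → C → ℝ := fun a b c => m2 a c * m1 b c / mz c with hgdef
  have hg : ∀ a b c, 0 ≤ g a b c := fun a b c =>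
    div_nonneg (mul_nonneg (hm2 a c) (hm1 b c)) (hmz c)
  have hterm : ∀ a b c,
      -(r a b c * Real.log (m2 a c)) + -(r a b c * Real.log (m1 b c))
      - -(r a b c * Real.log (mz c)) - -(r a b c * Real.log (r a b c))
      = -(r a b c * Real.log (g a b c / r a b c)) := by
    intro a b c
    rcases eq_or_lt_of_le (hr a b c) with h | h
    · rw [← h]; ring
    · have h2 : 0 < m2 a c := lt_of_lt_of_le h (hrm2 a b c)
      have h1 : 0 < m1 b c := lt_of_lt_of_le h (hrm1 a b c)
      have hz : 0 < mz c := lt_of_lt_of_le h2 (hm2mz a c)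
      have hgpos : 0 < g a b c := div_pos (mul_pos h2 h1) hz
      rw [Real.log_div (ne_of_gt hgpos) (ne_of_gt h), hgdef]
      rw [Real.log_div (ne_of_gt (mul_pos h2 h1)) (ne_of_gt hz),
        Real.log_mul (ne_of_gt h2) (ne_of_gt h1)]
      ring
  have main : 0 ≤ ∑ a, ∑ b, ∑ c, -(r a b c * Real.log (g a b c / r a b c)) := by
    have hsum : ∑ t : A × B × C, g t.1 t.2.1 t.2.2 ≤ ∑ t : A × B × C, r t.1 t.2.1 t.2.2 := by
      simp only [Fintype.sum_prod_type]
      rw [sum_rotate (fun a b c => g a b c), sum_rotate (fun a b c => r a b c)]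
      refine Finset.sum_le_sum fun c _ => ?_
      have hL : ∑ a, ∑ b, g a b c = mz c * mz c / mz c := by
        simp only [hgdef, ← Finset.sum_div]
        congr 1
        rw [← Fintype.sum_mul_sum]
        congr 1
        exact (Finset.sum_comm)
      rw [hL]
      rcases eq_or_ne (mz c) 0 with h | h
      · rw [h]; simpa using hmz c
      · rw [mul_div_assoc, div_self h, mul_one]
    have hG := gibbs (ι := A × B × C) (fun t => r t.1 t.2.1 t.2.2) (fun t => g t.1 t.2.1 t.2.2)
      (fun t => hr _ _ _) (fun t => hg _ _ _)
      (fun t ht => by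
        have h2 : 0 < m2 t.1 t.2.2 := lt_of_lt_of_le ht (hrm2 _ _ _)
        have h1 : 0 < m1 t.2.1 t.2.2 := lt_of_lt_of_le ht (hrm1 _ _ _)
        have hz : 0 < mz t.2.2 := lt_of_lt_of_le h2 (hm2mz _ _)
        exact div_pos (mul_pos h2 h1) hz) hsum
    simp only [Fintype.sum_prod_type] at hG
    have heq : ∑ a, ∑ b, ∑ c, -(r a b c * Real.log (g a b c / r a b c))
        = -∑ a, ∑ b, ∑ c, (r a b c * Real.log (g a b c / r a b c)) := by
      simp [← Finset.sum_neg_distrib]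
    rw [heq]
    linarith
  calc (0:ℝ) ≤ ∑ a, ∑ b, ∑ c, -(r a b c * Real.log (g a b c / r a b c)) := main
    _ = ∑ a, ∑ b, ∑ c,
        (-(r a b c * Real.log (m2 a c)) + -(r a b c * Real.log (m1 b c))
          - -(r a b c * Real.log (mz c)) - -(r a b c * Real.log (r a b c))) := by
        refine Finset.sum_congr rfl fun a _ => Finset.sum_congr rfl fun b _ =>
          Finset.sum_congr rfl fun c _ => (hterm a b c).symm
    _ = _ := by simp only [Finset.sum_add_distrib, Finset.sum_sub_distrib]

end CMINonneg

section Algebra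
variable {Ω A A' B B' C C' D : Type*} [Fintype Ω] [Fintype A] [DecidableEq A]
  [Fintype A'] [DecidableEq A'] [Fintype B] [DecidableEq B] [Fintype B'] [DecidableEq B']
  [Fintype C] [DecidableEq C] [Fintype C'] [DecidableEq C'] [Fintype D] [DecidableEq D]
  (p : Ω → ℝ)

lemma condEnt_congr_left {X : Ω → A} {X' : Ω → A'} (Z : Ω → C)
    (f : A → A') (g : A' → A) (hf : ∀ ω, f (X ω) = X' ω) (hg : ∀ ω, g (X' ω) = X ω) :
    condEnt p X Z = condEnt p X' Z := by
  unfold condEnt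
  rw [ent_congr p (X := fun ω => (X ω, Z ω)) (Y := fun ω => (X' ω, Z ω))
    (fun t => (f t.1, t.2)) (fun t => (g t.1, t.2))
    (fun ω => by simp [hf ω]) (fun ω => by simp [hg ω])]

lemma condEnt_congr_cond (X : Ω → A) {Z : Ω → C} {Z' : Ω → C'}
    (f : C → C') (g : C' → C) (hf : ∀ ω, f (Z ω) = Z' ω) (hg : ∀ ω, g (Z' ω) = Z ω) :
    condEnt p X Z = condEnt p X Z' := by
  unfold condEnt
  rw [ent_congr p (X := fun ω => (X ω, Z ω)) (Y := fun ω => (X ω, Z' ω))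
    (fun t => (t.1, f t.2)) (fun t => (t.1, g t.2))
    (fun ω => by simp [hf ω]) (fun ω => by simp [hg ω]),
    ent_congr p (X := Z) (Y := Z') f g hf hg]

lemma cmi_congr_left {X : Ω → A} {X' : Ω → A'} (Y : Ω → B) (Z : Ω → C)
    (f : A → A') (g : A' → A) (hf : ∀ ω, f (X ω) = X' ω) (hg : ∀ ω, g (X' ω) = X ω) :
    CMI p X Y Z = CMI p X' Y Z := by
  unfold CMI
  rw [condEnt_congr_left p Z f g hf hg,
    condEnt_congr_left p (X := fun ω => (X ω, Y ω)) (X' := fun ω => (X' ω, Y ω)) Z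
      (fun t => (f t.1, t.2)) (fun t => (g t.1, t.2))
      (fun ω => by simp [hf ω]) (fun ω => by simp [hg ω])]

lemma cmi_congr_cond (X : Ω → A) (Y : Ω → B) {Z : Ω → C} {Z' : Ω → C'}
    (f : C → C') (g : C' → C) (hf : ∀ ω, f (Z ω) = Z' ω) (hg : ∀ ω, g (Z' ω) = Z ω) :
    CMI p X Y Z = CMI p X Y Z' := by
  unfold CMI
  rw [condEnt_congr_cond p X f g hf hg, condEnt_congr_cond p Y f g hf hg,
    condEnt_congr_cond p (fun ω => (X ω, Y ω)) f g hf hg]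

lemma mi_congr_right (X : Ω → A) {Y : Ω → B} {Y' : Ω → B'}
    (f : B → B') (g : B' → B) (hf : ∀ ω, f (Y ω) = Y' ω) (hg : ∀ ω, g (Y' ω) = Y ω) :
    MI p X Y = MI p X Y' := by
  unfold MI
  rw [ent_congr p (X := Y) (Y := Y') f g hf hg,
    ent_congr p (X := fun ω => (X ω, Y ω)) (Y := fun ω => (X ω, Y' ω))
    (fun t => (t.1, f t.2)) (fun t => (t.1, g t.2))
    (fun ω => by simp [hf ω]) (fun ω => by simp [hg ω])]

lemma cmi_comm (X : Ω → A) (Y : Ω → B) (Z : Ω → C) : CMI p X Y Z = CMI p Y X Z := by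
  unfold CMI
  rw [condEnt_congr_left p (X := fun ω => (X ω, Y ω)) (X' := fun ω => (Y ω, X ω)) Z
    Prod.swap Prod.swap (fun ω => rfl) (fun ω => rfl)]
  ring

lemma cmi_eq_sub (X : Ω → A) (Y : Ω → B) (Z : Ω → C) :
    CMI p X Y Z = condEnt p X Z - condEnt p X (fun ω => (Y ω, Z ω)) := by
  unfold CMI condEnt
  have h : ent p (fun ω => ((X ω, Y ω), Z ω)) = ent p (fun ω => (X ω, (Y ω, Z ω))) :=
    ent_congr p (fun t => (t.1.1, (t.1.2, t.2))) (fun t => ((t.1, t.2.1), t.2.2))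
      (fun ω => rfl) (fun ω => rfl)
  have h2 : ent p (fun ω => (Y ω, Z ω)) = ent p (fun ω => (Y ω, Z ω)) := rfl
  linarith [h]

lemma condEnt_nonneg (hp : ∀ ω, 0 ≤ p ω) (X : Ω → A) (Z : Ω → C) :
    0 ≤ condEnt p X Z := by
  have h := cmi_nonneg p hp X X Z
  unfold CMI at h
  have h2 : condEnt p (fun ω => (X ω, X ω)) Z = condEnt p X Z :=
    condEnt_congr_left p Z Prod.fst (fun a => (a, a)) (fun ω => rfl) (fun ω => rfl)
  linarith

lemma condEnt_pair_le (hp : ∀ ω, 0 ≤ p ω) (U : Ω → A) (V : Ω → B) (Z : Ω → C) :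
    condEnt p (fun ω => (U ω, V ω)) Z ≤ condEnt p U Z + condEnt p V Z := by
  have h := cmi_nonneg p hp U V Z
  unfold CMI at h
  linarith

lemma condEnt_le_of_det (hp : ∀ ω, 0 ≤ p ω) (X : Ω → A) {Z : Ω → C} {Z' : Ω → C'}
    (g : C' → C) (hg : ∀ ω, g (Z' ω) = Z ω) :
    condEnt p X Z' ≤ condEnt p X Z := by
  have h1 : condEnt p X Z' = condEnt p X (fun ω => (Z' ω, Z ω)) :=
    condEnt_congr_cond p X (fun z' => (z', g z')) Prod.fst
      (fun ω => by simp [hg ω]) (fun ω => rfl)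
  have h2 := cmi_eq_sub p X Z' Z
  have h3 := cmi_nonneg p hp X Z' Z
  linarith

lemma condEnt_zero_of_det (hp : ∀ ω, 0 ≤ p ω) (X : Ω → A) {Z : Ω → C} {Z' : Ω → C'}
    (g : C' → C) (hg : ∀ ω, g (Z' ω) = Z ω) (h : condEnt p X Z = 0) :
    condEnt p X Z' = 0 :=
  le_antisymm (h ▸ condEnt_le_of_det p hp X g hg) (condEnt_nonneg p hp X Z')

lemma cmi_zero_of_condEnt (hp : ∀ ω, 0 ≤ p ω) (X : Ω → A) (Y : Ω → B) (Z : Ω → C)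
    (h : condEnt p X Z = 0) : CMI p X Y Z = 0 := by
  rw [cmi_eq_sub, h]
  have h2 : condEnt p X (fun ω => (Y ω, Z ω)) = 0 :=
    condEnt_zero_of_det p hp X Prod.snd (fun ω => rfl) h
  rw [h2]; ring

lemma cmi_chain (X : Ω → A) (W : Ω → D) (Y : Ω → B) (Z : Ω → C) :
    CMI p (fun ω => (X ω, W ω)) Y Z
      = CMI p X Y Z + CMI p W Y (fun ω => (X ω, Z ω)) := by
  unfold CMI condEnt
  have e1 : ent p (fun ω => (W ω, (X ω, Z ω))) = ent p (fun ω => ((X ω, W ω), Z ω)) :=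
    ent_congr p (fun t => ((t.2.1, t.1), t.2.2)) (fun t => (t.1.2, (t.1.1, t.2)))
      (fun ω => rfl) (fun ω => rfl)
  have e2 : ent p (fun ω => (Y ω, (X ω, Z ω))) = ent p (fun ω => ((X ω, Y ω), Z ω)) :=
    ent_congr p (fun t => ((t.2.1, t.1), t.2.2)) (fun t => (t.1.2, (t.1.1, t.2)))
      (fun ω => rfl) (fun ω => rfl)
  have e3 : ent p (fun ω => ((W ω, Y ω), (X ω, Z ω)))
      = ent p (fun ω => (((X ω, W ω), Y ω), Z ω)) :=
    ent_congr p (fun t => (((t.2.1, t.1.1), t.1.2), t.2.2))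
      (fun t => ((t.1.1.2, t.1.2), (t.1.1.1, t.2)))
      (fun ω => rfl) (fun ω => rfl)
  have e4 : ent p (fun ω => (X ω, (Y ω, Z ω))) = ent p (fun ω => ((X ω, Y ω), Z ω)) :=
    ent_congr p (fun t => ((t.1, t.2.1), t.2.2)) (fun t => (t.1.1, (t.1.2, t.2)))
      (fun ω => rfl) (fun ω => rfl)
  linarith

lemma mi_chain (X : Ω → A) (Y : Ω → B) (Z : Ω → C) :
    MI p X (fun ω => (Y ω, Z ω)) = MI p X Z + CMI p Y X Z := by
  unfold MI CMI condEnt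
  have e1 : ent p (fun ω => (X ω, (Y ω, Z ω))) = ent p (fun ω => ((Y ω, X ω), Z ω)) :=
    ent_congr p (fun t => ((t.2.1, t.1), t.2.2)) (fun t => (t.1.2, (t.1.1, t.2)))
      (fun ω => rfl) (fun ω => rfl)
  linarith

lemma ent_unique [Unique D] (hp1 : ∑ ω, p ω = 1) (W : Ω → D) : ent p W = 0 := by
  unfold ent
  rw [Finset.univ_unique, Finset.sum_singleton]
  have : rvDist p W default = 1 := by
    unfold rvDist
    rw [← hp1]
    exact Finset.sum_congr rfl fun ω _ => by simp [Unique.eq_default (W ω)]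
  rw [this]
  simp [Real.negMulLog]

lemma condEnt_unique_left [Unique D] (W : Ω → D) (Z : Ω → C) : condEnt p W Z = 0 := by
  unfold condEnt
  rw [ent_congr p (X := fun ω => (W ω, Z ω)) (Y := Z) Prod.snd (fun z => (default, z))
    (fun ω => rfl) (fun ω => by simp [Unique.eq_default (W ω)])]
  ring

lemma mi_unique_right [Unique D] (hp1 : ∑ ω, p ω = 1) (X : Ω → A) (W : Ω → D) :
    MI p X W = 0 := by
  unfold MI
  rw [ent_unique p hp1 W,
    ent_congr p (X := fun ω => (X ω, W ω)) (Y := X) Prod.fst (fun a => (a, default))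
      (fun ω => rfl) (fun ω => by simp [Unique.eq_default (W ω)])]
  ring

end Algebra

section Tele
variable {Ω M C : Type*} [Fintype Ω] [Fintype M] [DecidableEq M]
  [Fintype C] [DecidableEq C] {m : ℕ} (p : Ω → ℝ)

/-- `pre w (k+1)` is mutually determined by `(w k, pre w k)`. -/
lemma mi_pre_succ (x0 : Ω → M) (w : Fin m → Ω → C) (k : ℕ) (h : k < m) :
    MI p x0 (pre w (k+1) h) = MI p x0 (pre w k h.le)
      + CMI p (w ⟨k, h⟩) x0 (pre w k h.le) := by
  have hcongr : MI p x0 (pre w (k+1) h)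
      = MI p x0 (fun ω => (w ⟨k, h⟩ ω, pre w k h.le ω)) := by
    refine mi_congr_right p x0
      (fun v => (v (Fin.last k), fun j => v j.castSucc))
      (fun t => Fin.snoc t.2 t.1) (fun ω => rfl) (fun ω => ?_)
    funext j
    refine Fin.lastCases ?_ (fun j => ?_) j
    · simp only [Fin.snoc_last]; rfl
    · simp only [Fin.snoc_castSucc]; rfl
  rw [hcongr, mi_chain]

lemma mi_telescope (hp1 : ∑ ω, p ω = 1) (x0 : Ω → M) (w : Fin m → Ω → C) :
    ∀ k (hk : k ≤ m), MI p x0 (pre w k hk)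
      = ∑ j : Fin m, if j.1 < k then CMI p x0 (w j) (pre w j.1 j.isLt.le) else 0 := by
  intro k
  induction k with
  | zero =>
      intro hk
      rw [mi_unique_right p hp1]
      simp
  | succ k ih =>
      intro hk
      have hkm : k < m := hk
      rw [mi_pre_succ p x0 w k hkm, ih hkm.le,
        cmi_comm p (w ⟨k, hkm⟩) x0 (pre w k hkm.le)]
      have hsplit : ∀ j : Fin m,
          (if j.1 < k + 1 then CMI p x0 (w j) (pre w j.1 j.isLt.le) else 0)
          = (if j.1 < k then CMI p x0 (w j) (pre w j.1 j.isLt.le) else 0)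
            + (if j = ⟨k, hkm⟩ then CMI p x0 (w j) (pre w j.1 j.isLt.le) else 0) := by
        intro j
        rcases lt_trichotomy j.1 k with h | h | h
        · rw [if_pos (Nat.lt_succ_of_lt h), if_pos h, if_neg, add_zero]
          exact fun hj => absurd (congrArg Fin.val hj) (by simp [Nat.ne_of_lt h])
        · have hj : j = ⟨k, hkm⟩ := Fin.ext h
          rw [if_pos (by omega), if_neg (by omega), if_pos hj, zero_add]
        · rw [if_neg (by omega), if_neg (by omega), if_neg, add_zero]
          exact fun hj => absurd (congrArg Fin.val hj) (by simp; omega)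
      rw [Finset.sum_congr rfl fun j _ => hsplit j, Finset.sum_add_distrib,
        Finset.sum_ite_eq' Finset.univ (⟨k, hkm⟩ : Fin m)]
      simp

lemma mi_full (hp1 : ∑ ω, p ω = 1) (x0 : Ω → M) (w : Fin m → Ω → C) :
    MI p x0 (fun ω i => w i ω)
      = ∑ j : Fin m, CMI p x0 (w j) (pre w j.1 j.isLt.le) := by
  have h : (fun ω (i : Fin m) => w i ω) = pre w m le_rfl := rfl
  rw [h, mi_telescope p hp1 x0 w m le_rfl]
  exact Finset.sum_congr rfl fun j _ => by rw [if_pos j.isLt]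

end Tele

/-- STATEMENT 6 (Theorem 2, lower bound on forward channel flow), with `n = m+1`,
`x^n, y^n` of length `m+1` and `e^{n-1}` of length `m`. -/
theorem forward_flow_lower_bound {Ω M A B C : Type*} [Fintype Ω]
    [Fintype M] [DecidableEq M] [Fintype A] [DecidableEq A]
    [Fintype B] [DecidableEq B] [Fintype C] [DecidableEq C] {m : ℕ} (p : Ω → ℝ)
    (hp : ∀ ω, 0 ≤ p ω) (hp1 : ∑ ω, p ω = 1)
    (x0 : Ω → M) (x : Fin (m+1) → Ω → A) (y : Fin (m+1) → Ω → B) (e : Fin m → Ω → C)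
    (hidentity : DI p x y =
      MI p x0 (fun ω i => y i ω) +
      CMI p (fun ω i => e i ω) x0 (fun ω i => y i ω) +
      ∑ i : Fin (m+1), CMI p (pre e i.1 (Nat.lt_succ_iff.mp i.isLt)) (y i)
        (pre y i.1 i.isLt.le))
    (hdet : ∀ i : Fin m, condEnt p (x i.castSucc)
      (fun ω => (x0 ω, pre e i.1 i.isLt.le ω)) = 0)
    (hmarkov : ∀ i : Fin m,
      CMI p x0 (e i) (fun ω => (pre e i.1 i.isLt.le ω,
        pre (fun j : Fin m => x j.castSucc) (i.1+1) i.isLt ω)) = 0) :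
    DI p x y ≥ DI p (fun j : Fin m => x j.castSucc) e +
      ∑ i : Fin (m+1), CMI p (pre e i.1 (Nat.lt_succ_iff.mp i.isLt)) (y i)
        (pre y i.1 i.isLt.le) ∧
    DI p x y = DI p (fun j : Fin m => x j.castSucc) e +
      ∑ i : Fin (m+1), CMI p (pre e i.1 (Nat.lt_succ_iff.mp i.isLt)) (y i)
        (pre y i.1 i.isLt.le) +
      CMI p (fun ω i => y i ω) x0 (fun ω i => e i ω) := by
  classical
  set x' : Fin m → Ω → A := fun j => x j.castSucc with hx'
  set Y : Ω → (Fin (m+1) → B) := fun ω i => y i ω with hYdef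
  set E : Ω → (Fin m → C) := fun ω i => e i ω with hEdef
  -- per-step conversion using hdet and hmarkov
  have key : ∀ i : Fin m,
      CMI p x0 (e i) (pre e i.1 i.isLt.le)
        = CMI p (pre x' (i.1+1) i.isLt) (e i) (pre e i.1 i.isLt.le) := by
    intro i
    set Xi : Ω → (Fin (i.1+1) → A) := pre x' (i.1+1) i.isLt with hXidef
    set Ei : Ω → (Fin i.1 → C) := pre e i.1 i.isLt.le with hEidef
    have claim : ∀ k, ∀ (hk : k ≤ m), k ≤ i.1 + 1 →
        condEnt p (pre x' k hk) (fun ω => (x0 ω, Ei ω)) = 0 := by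
      intro k
      induction k with
      | zero => intro hk _; exact condEnt_unique_left p _ _
      | succ k ih =>
          intro hk hki1
          have hki : k ≤ i.1 := Nat.lt_succ_iff.mp hki1
          have hkm : k < m := lt_of_le_of_lt hki i.isLt
          have hsplit : condEnt p (pre x' (k+1) hk) (fun ω => (x0 ω, Ei ω))
              = condEnt p (fun ω => (x' ⟨k, hkm⟩ ω, pre x' k hkm.le ω))
                  (fun ω => (x0 ω, Ei ω)) := by
            refine condEnt_congr_left p _
              (fun v => (v (Fin.last k), fun j => v j.castSucc))
              (fun t => Fin.snoc t.2 t.1) (fun ω => rfl) (fun ω => ?_)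
            funext j
            refine Fin.lastCases ?_ (fun j => ?_) j
            · simp only [Fin.snoc_last]; rfl
            · simp only [Fin.snoc_castSucc]; rfl
          have h1 : condEnt p (x' ⟨k, hkm⟩) (fun ω => (x0 ω, Ei ω)) = 0 := by
            refine condEnt_zero_of_det p hp _
              (fun t => (t.1, fun s => t.2 (Fin.castLE hki s)))
              (fun ω => rfl) (hdet ⟨k, hkm⟩)
          have h2 : condEnt p (pre x' k hkm.le) (fun ω => (x0 ω, Ei ω)) = 0 :=
            ih hkm.le (le_trans hki (Nat.le_succ _))
          have hle := condEnt_pair_le p hp (x' ⟨k, hkm⟩) (pre x' k hkm.le)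
            (fun ω => (x0 ω, Ei ω))
          have hnn := condEnt_nonneg p hp (pre x' (k+1) hk) (fun ω => (x0 ω, Ei ω))
          rw [hsplit]
          rw [hsplit] at hnn
          linarith
    have hdetXi : condEnt p Xi (fun ω => (x0 ω, Ei ω)) = 0 :=
      claim (i.1+1) i.isLt le_rfl
    have hz : CMI p Xi (e i) (fun ω => (x0 ω, Ei ω)) = 0 :=
      cmi_zero_of_condEnt p hp _ _ _ hdetXi
    have h1chain := cmi_chain p x0 Xi (e i) Ei
    have hswap : CMI p (fun ω => (x0 ω, Xi ω)) (e i) Ei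
        = CMI p (fun ω => (Xi ω, x0 ω)) (e i) Ei :=
      cmi_congr_left p _ _ Prod.swap Prod.swap (fun ω => rfl) (fun ω => rfl)
    have h2chain := cmi_chain p Xi x0 (e i) Ei
    have hcond : CMI p x0 (e i) (fun ω => (Xi ω, Ei ω))
        = CMI p x0 (e i) (fun ω => (Ei ω, Xi ω)) :=
      cmi_congr_cond p _ _ Prod.swap Prod.swap (fun ω => rfl) (fun ω => rfl)
    have hm := hmarkov i
    linarith
  -- Lemma 1: I(x0; e^{n-1}) = I(x^{n-1} → e^{n-1})
  have hMIE : MI p x0 E = DI p x' e := by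
    have h := mi_full p hp1 x0 e
    calc MI p x0 E = ∑ j : Fin m, CMI p x0 (e j) (pre e j.1 j.isLt.le) := h
      _ = ∑ j : Fin m, CMI p (pre x' (j.1+1) j.isLt) (e j) (pre e j.1 j.isLt.le) :=
          Finset.sum_congr rfl fun j _ => key j
      _ = DI p x' e := rfl
  -- chain rule rearrangement
  have hchain1 : MI p x0 (fun ω => (E ω, Y ω)) = MI p x0 Y + CMI p E x0 Y :=
    mi_chain p x0 E Y
  have hswapEY : MI p x0 (fun ω => (E ω, Y ω)) = MI p x0 (fun ω => (Y ω, E ω)) :=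
    mi_congr_right p x0 Prod.swap Prod.swap (fun ω => rfl) (fun ω => rfl)
  have hchain2 : MI p x0 (fun ω => (Y ω, E ω)) = MI p x0 E + CMI p Y x0 E :=
    mi_chain p x0 Y E
  have heq : DI p x y = DI p x' e +
      (∑ i : Fin (m+1), CMI p (pre e i.1 (Nat.lt_succ_iff.mp i.isLt)) (y i)
        (pre y i.1 i.isLt.le)) + CMI p Y x0 E := by
    rw [hidentity]; linarith
  refine ⟨?_, heq⟩
  have hnn := cmi_nonneg p hp Y x0 E
  rw [ge_iff_le, heq]
  linarith
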